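/- arXiv:1607.00906 — 9 statements merged into one kernel-verified Lean document; each statement's English description precedes it below -/
import Mathlib

section
/- For a monoid S, if S is left reversible (any two right ideals of S have nonempty intersection), then a right S-act A is indecomposable if and only if for any a, a' in A there exist s, s' in S such that as = a's'. -/
/-- `act` is a (unital, associative) right `S`-action on `A`. -/
def IsRAct (S : Type*) [Monoid S] {A : Type*} (act : A → S → A) : Prop :=
  (∀ (a : A) (s t : S), act (act a s) t = act a (s * t)) ∧ ∀ a : A, act a 1 = a

/-- `B` is a subact: a nonempty subset closed under the action. -/
def IsSubact {S A : Type*} (act : A → S → A) (B : Set A) : Prop :=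
  B.Nonempty ∧ ∀ a ∈ B, ∀ s : S, act a s ∈ B

/-- An act is indecomposable if it is not the disjoint union of two subacts. -/
def Indecomp {S A : Type*} (act : A → S → A) : Prop :=
  ¬ ∃ B C : Set A, IsSubact act B ∧ IsSubact act C ∧ B ∩ C = ∅ ∧ B ∪ C = Set.univ

/-- `S` is left reversible: any two principal (hence any two) right ideals intersect. -/
def LeftReversible (S : Type*) [Monoid S] : Prop :=
  ∀ a b : S, ∃ u v : S, a * u = b * v

/-- A scheme of length `n ≥ 1` connecting `a` to `b`:
`a = a₁s₁, aᵢtᵢ = aᵢ₊₁sᵢ₊₁ (1 ≤ i < n), aₙtₙ = b` (1-indexed). -/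
def SchemeOfLength {S A : Type*} [Monoid S] (act : A → S → A) (n : ℕ) (a b : A) : Prop :=
  ∃ (c : ℕ → A) (s t : ℕ → S),
    a = act (c 1) (s 1) ∧
    (∀ i, 1 ≤ i → i < n → act (c i) (t i) = act (c (i + 1)) (s (i + 1))) ∧
    act (c n) (t n) = b

theorem stmt0 (S : Type*) [Monoid S] (hrev : LeftReversible S)
    (A : Type*) [Nonempty A] (act : A → S → A) (hact : IsRAct S act) :
    Indecomp act ↔ ∀ a a' : A, ∃ s s' : S, act a s = act a' s' := by
  obtain ⟨hmul, hone⟩ := hact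
  constructor
  · intro hind a a'
    set B : Set A := {x | ∃ s s' : S, act a s = act x s'} with hB
    have haB : a ∈ B := ⟨1, 1, rfl⟩
    have hBsub : IsSubact act B := by
      refine ⟨⟨a, haB⟩, ?_⟩
      rintro x ⟨s, s', hss⟩ t
      obtain ⟨u, v, huv⟩ := hrev s' t
      exact ⟨s * u, v, by rw [← hmul, hss, hmul, huv, ← hmul]⟩
    by_cases hC : (Bᶜ : Set A).Nonempty
    · exfalso
      apply hind
      refine ⟨B, Bᶜ, hBsub, ⟨hC, ?_⟩, by simp, by simp⟩
      rintro x hx t hxt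
      obtain ⟨s, s', hss⟩ := hxt
      exact hx ⟨s, t * s', by rw [← hmul]; exact hss⟩
    · have : a' ∈ B := by
        by_contra h
        exact hC ⟨a', h⟩
      obtain ⟨s, s', h⟩ := this
      exact ⟨s, s', h⟩
  · rintro h ⟨B, C, ⟨⟨b, hb⟩, hBc⟩, ⟨⟨c, hc⟩, hCc⟩, hdisj, -⟩
    obtain ⟨s, s', hss⟩ := h b c
    have h1 : act b s ∈ B := hBc b hb s
    have h2 : act b s ∈ C := hss ▸ hCc c hc s'
    exact absurd (Set.mem_inter h1 h2) (by rw [hdisj]; exact not_false)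
end

section
/- For a monoid S that is not left reversible (i.e., there exist a, b ∈ S with aS ∩ bS = ∅), every non-zero cofree right S-act X^S (with |X| ≥ 2) is indecomposable. -/
theorem stmt4 (S : Type*) [Monoid S] (hrev : ¬ LeftReversible S)
    (X : Type*) (x₁ x₂ : X) (hx : x₁ ≠ x₂) :
    Indecomp (fun (f : S → X) (s : S) => fun t => f (s * t)) := by
  rintro ⟨B, C, ⟨⟨f, hf⟩, hBcl⟩, ⟨⟨g, hg⟩, hCcl⟩, hdisj, huniv⟩
  simp only [LeftReversible, not_forall, not_exists] at hrev
  obtain ⟨a, b, hab⟩ := hrev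
  classical
  set h : S → X := fun t => if ∃ u, t = a * u then f t else g t with hh
  have ha : (fun t => h (a * t)) = (fun t => f (a * t)) := by
    funext t; simp only [hh]; exact if_pos ⟨t, rfl⟩
  have hb : (fun t => h (b * t)) = (fun t => g (b * t)) := by
    funext t; simp only [hh]
    exact if_neg (by rintro ⟨u, hu⟩; exact hab u t hu.symm)
  have hmem : h ∈ B ∪ C := by rw [huniv]; trivial
  rcases hmem with hB | hC
  · have h1 : (fun t => h (b * t)) ∈ B := hBcl h hB b
    have h2 : (fun t => g (b * t)) ∈ C := hCcl g hg b
    rw [hb] at h1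
    exact absurd hdisj (by rw [Set.eq_empty_iff_forall_notMem]; push_neg
                           exact ⟨_, h1, h2⟩)
  · have h1 : (fun t => h (a * t)) ∈ C := hCcl h hC a
    have h2 : (fun t => f (a * t)) ∈ B := hBcl f hf a
    rw [ha] at h1
    exact absurd hdisj (by rw [Set.eq_empty_iff_forall_notMem]; push_neg
                           exact ⟨_, h2, h1⟩)
end

section
/- For a left reversible monoid S, every cofree right S-act X^S with |X| ≥ 2 is decomposable. -/
theorem stmt5 (S : Type*) [Monoid S] (hrev : LeftReversible S)
    (X : Type*) (x₁ x₂ : X) (hx : x₁ ≠ x₂) :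
    ¬ Indecomp (fun (f : S → X) (s : S) => fun t => f (s * t)) := by
  classical
  intro h
  apply h
  set act : (S → X) → S → (S → X) := fun f s => fun t => f (s * t) with hact
  set z : S → X := fun _ => x₁ with hz
  set R : (S → X) → (S → X) → Prop := fun f g => ∃ s, g = act f s with hR
  have key : ∀ a b : S → X, Relation.EqvGen R a b →
      ((∃ w, act a w = z) ↔ (∃ w, act b w = z)) := by
    intro a b hab
    induction hab with
    | rel a b hab =>
      obtain ⟨s, rfl⟩ := hab
      constructor
      · rintro ⟨w, hw⟩
        obtain ⟨u, v, huv⟩ := hrev s w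
        refine ⟨u, ?_⟩
        funext t
        calc (act (act a s) u) t = a (s * u * t) := by simp [hact, mul_assoc]
          _ = a (w * v * t) := by rw [huv]
          _ = (act (act a w) v) t := by simp [hact, mul_assoc]
          _ = z t := by rw [hw]
      · rintro ⟨w, hw⟩
        refine ⟨s * w, ?_⟩
        funext t
        have := congrFun hw t
        simpa [hact, mul_assoc] using this
    | refl => exact Iff.rfl
    | symm _ _ _ ih => exact ih.symm
    | trans _ _ _ _ _ ih1 ih2 => exact ih1.trans ih2
  refine ⟨{f | Relation.EqvGen R z f}, {f | ¬ Relation.EqvGen R z f}, ?_, ?_, ?_, ?_⟩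
  · refine ⟨⟨z, Relation.EqvGen.refl z⟩, fun a ha s => ?_⟩
    exact Relation.EqvGen.trans _ _ _ ha (Relation.EqvGen.rel _ _ ⟨s, rfl⟩)
  · constructor
    · refine ⟨fun _ => x₂, ?_⟩
      intro hE
      have h1 : ∃ w, act z w = z := ⟨1, rfl⟩
      obtain ⟨w, hw⟩ := (key z _ hE).mp h1
      have := congrFun hw 1
      exact hx this.symm
    · intro a ha s hcontra
      exact ha (Relation.EqvGen.trans _ _ _ hcontra
        (Relation.EqvGen.symm _ _ (Relation.EqvGen.rel _ _ ⟨s, rfl⟩)))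
  · ext f; simp only [Set.mem_inter_iff, Set.mem_setOf_eq, Set.mem_empty_iff_false]; tauto
  · ext f; simp only [Set.mem_union, Set.mem_setOf_eq, Set.mem_univ, iff_true]; tauto
end

section
/- Let S be a monoid, X a right S-act, and f₁ : X → Y₁, f₂ : X → Y₂ homomorphisms of right S-acts with Y₁ and Y₂ indecomposable. Then the pushout Q of (f₁, f₂), realized as (Y₁ ⊔ Y₂)/ν where ν is the congruence generated by all pairs (f₁(x), f₂(x)) for x ∈ X, is indecomposable. -/
theorem stmt7 (S : Type*) [Monoid S] (X Y₁ Y₂ : Type*)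
    [Nonempty X] [Nonempty Y₁] [Nonempty Y₂]
    (actX : X → S → X) (act₁ : Y₁ → S → Y₁) (act₂ : Y₂ → S → Y₂)
    (hX : IsRAct S actX) (h1 : IsRAct S act₁) (h2 : IsRAct S act₂)
    (f₁ : X → Y₁) (f₂ : X → Y₂)
    (hf₁ : ∀ x s, f₁ (actX x s) = act₁ (f₁ x) s)
    (hf₂ : ∀ x s, f₂ (actX x s) = act₂ (f₂ x) s)
    (hY₁ : Indecomp act₁) (hY₂ : Indecomp act₂) :
    Indecomp (fun (q : Quot (fun p q : Y₁ ⊕ Y₂ =>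
        ∃ x : X, p = Sum.inl (f₁ x) ∧ q = Sum.inr (f₂ x))) (s : S) =>
      Quot.map
        (Sum.elim (fun y => Sum.inl (act₁ y s)) (fun y => Sum.inr (act₂ y s)))
        (fun p q h => by
          obtain ⟨x, rfl, rfl⟩ := h
          exact ⟨actX x s, by simp [hf₁], by simp [hf₂]⟩) q) := by
  set r := fun p q : Y₁ ⊕ Y₂ =>
      ∃ x : X, p = Sum.inl (f₁ x) ∧ q = Sum.inr (f₂ x) with hr
  rintro ⟨B, C, ⟨hBne, hBcl⟩, ⟨hCne, hCcl⟩, hdisj, huniv⟩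
  have hmem : ∀ q : Quot r, q ∈ B ∨ q ∈ C := fun q =>
    Set.eq_univ_iff_forall.mp huniv q
  have hnot : ∀ q : Quot r, ¬ (q ∈ B ∧ q ∈ C) := fun q hq =>
    Set.eq_empty_iff_forall_notMem.mp hdisj q hq
  have key1 : (∀ y : Y₁, Quot.mk r (Sum.inl y) ∈ B) ∨
      (∀ y : Y₁, Quot.mk r (Sum.inl y) ∈ C) := by
    by_contra h
    push_neg at h
    obtain ⟨⟨yc, hyc⟩, ⟨yb, hyb⟩⟩ := h
    refine hY₁ ⟨{y | Quot.mk r (Sum.inl y) ∈ B}, {y | Quot.mk r (Sum.inl y) ∈ C},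
      ⟨⟨yb, (hmem _).resolve_right hyb⟩, fun a ha s => hBcl _ ha s⟩,
      ⟨⟨yc, (hmem _).resolve_left hyc⟩, fun a ha s => hCcl _ ha s⟩, ?_, ?_⟩
    · ext y; simp only [Set.mem_inter_iff, Set.mem_setOf_eq, Set.mem_empty_iff_false, iff_false]
      exact fun hh => hnot _ hh
    · ext y; simp only [Set.mem_union, Set.mem_setOf_eq, Set.mem_univ, iff_true]
      exact hmem _
  have key2 : (∀ y : Y₂, Quot.mk r (Sum.inr y) ∈ B) ∨
      (∀ y : Y₂, Quot.mk r (Sum.inr y) ∈ C) := by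
    by_contra h
    push_neg at h
    obtain ⟨⟨yc, hyc⟩, ⟨yb, hyb⟩⟩ := h
    refine hY₂ ⟨{y | Quot.mk r (Sum.inr y) ∈ B}, {y | Quot.mk r (Sum.inr y) ∈ C},
      ⟨⟨yb, (hmem _).resolve_right hyb⟩, fun a ha s => hBcl _ ha s⟩,
      ⟨⟨yc, (hmem _).resolve_left hyc⟩, fun a ha s => hCcl _ ha s⟩, ?_, ?_⟩
    · ext y; simp only [Set.mem_inter_iff, Set.mem_setOf_eq, Set.mem_empty_iff_false, iff_false]
      exact fun hh => hnot _ hh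
    · ext y; simp only [Set.mem_union, Set.mem_setOf_eq, Set.mem_univ, iff_true]
      exact hmem _
  obtain ⟨x₀⟩ := ‹Nonempty X›
  have heq : Quot.mk r (Sum.inl (f₁ x₀)) = Quot.mk r (Sum.inr (f₂ x₀)) :=
    Quot.sound ⟨x₀, rfl, rfl⟩
  have hall : ∀ q : Quot r, (∃ y, q = Quot.mk r (Sum.inl y)) ∨
      (∃ y, q = Quot.mk r (Sum.inr y)) := by
    intro q
    induction q using Quot.ind with
    | _ p => cases p with
      | inl y => exact Or.inl ⟨y, rfl⟩
      | inr y => exact Or.inr ⟨y, rfl⟩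
  rcases key1 with k1 | k1 <;> rcases key2 with k2 | k2
  · obtain ⟨q, hq⟩ := hCne
    rcases hall q with ⟨y, rfl⟩ | ⟨y, rfl⟩
    · exact hnot _ ⟨k1 y, hq⟩
    · exact hnot _ ⟨k2 y, hq⟩
  · exact hnot _ ⟨k1 (f₁ x₀), heq ▸ k2 (f₂ x₀)⟩
  · exact hnot _ ⟨heq ▸ k2 (f₂ x₀), k1 (f₁ x₀)⟩
  · obtain ⟨q, hq⟩ := hBne
    rcases hall q with ⟨y, rfl⟩ | ⟨y, rfl⟩
    · exact hnot _ ⟨hq, k1 y⟩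
    · exact hnot _ ⟨hq, k2 y⟩
end

section
/- For a monoid S, if S × S is indecomposable as a right S-act, then the product of any two indecomposable right S-acts is indecomposable. -/
section Aux

variable {S A : Type*} [Monoid S]

/-- One step of a scheme. -/
def RStep (act : A → S → A) (a b : A) : Prop := ∃ c s t, a = act c s ∧ b = act c t

/-- Connectedness: reflexive transitive closure of `RStep`. -/
def Conn (act : A → S → A) : A → A → Prop := Relation.ReflTransGen (RStep act)

lemma conn_act {act : A → S → A} (h : IsRAct S act) (a : A) (s : S) :
    Conn act a (act a s) :=
  Relation.ReflTransGen.single ⟨a, 1, s, (h.2 a).symm, rfl⟩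

lemma indecomp_of_conn {act : A → S → A} (hc : ∀ a b, Conn act a b) :
    Indecomp act := by
  rintro ⟨Bs, Cs, ⟨⟨b, hb⟩, hBc⟩, ⟨⟨c, hcC⟩, hCc⟩, hdisj, hcov⟩
  have key : ∀ x y, Conn act x y → x ∈ Bs → y ∈ Bs := by
    intro x y hxy
    induction hxy with
    | refl => exact id
    | tail _ step ih =>
      intro hx
      obtain ⟨d, s, t, hm, hy⟩ := step
      rcases (hcov ▸ Set.mem_univ d : d ∈ Bs ∪ Cs) with hd | hd
      · exact hy ▸ hBc d hd t
      · exact absurd (Set.mem_inter (ih hx) (hm ▸ hCc d hd s))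
          (by simp [hdisj])
  exact absurd (Set.mem_inter (key b c (hc b c) hb) hcC) (by simp [hdisj])

lemma conn_of_indecomp {act : A → S → A} (h : IsRAct S act)
    (hi : Indecomp act) : ∀ a b, Conn act a b := by
  intro a b
  by_contra hnc
  apply hi
  refine ⟨{x | Conn act a x}, {x | ¬ Conn act a x},
    ⟨⟨a, Relation.ReflTransGen.refl⟩, ?_⟩, ⟨⟨b, hnc⟩, ?_⟩, ?_, ?_⟩
  · intro x hx s; exact hx.trans (conn_act h x s)
  · intro x hx s hxs
    exact hx (hxs.tail ⟨x, s, 1, rfl, (h.2 x).symm⟩)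
  · ext x; simp only [Set.mem_inter_iff, Set.mem_setOf_eq]; tauto
  · ext x; simp only [Set.mem_union, Set.mem_setOf_eq]; tauto

lemma conn_map {A' : Type*} {act : A → S → A} {act' : A' → S → A'}
    (f : A → A') (hf : ∀ a s, f (act a s) = act' (f a) s)
    {a b : A} (hab : Conn act a b) : Conn act' (f a) (f b) := by
  induction hab with
  | refl => exact Relation.ReflTransGen.refl
  | tail _ step ih =>
    obtain ⟨c, s, t, h1, h2⟩ := step
    exact ih.tail ⟨f c, s, t, by rw [h1, hf], by rw [h2, hf]⟩

end Aux

theorem stmt10 (S : Type*) [Monoid S]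
    (h : Indecomp (fun (p : S × S) (s : S) => (p.1 * s, p.2 * s)))
    (A B : Type*) [Nonempty A] [Nonempty B]
    (actA : A → S → A) (actB : B → S → B)
    (hA : IsRAct S actA) (hB : IsRAct S actB)
    (hiA : Indecomp actA) (hiB : Indecomp actB) :
    Indecomp (fun (p : A × B) (s : S) => (actA p.1 s, actB p.2 s)) := by
  set pact := fun (p : A × B) (s : S) => (actA p.1 s, actB p.2 s) with hpact
  set sact := fun (p : S × S) (s : S) => (p.1 * s, p.2 * s) with hsact
  have hSact : IsRAct S sact := ⟨fun a s t => by simp [hsact, mul_assoc],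
    fun a => by simp [hsact]⟩
  have hSS : ∀ p q : S × S, Conn sact p q := conn_of_indecomp hSact h
  have connA : ∀ a a' : A, Conn actA a a' := conn_of_indecomp hA hiA
  have connB : ∀ b b' : B, Conn actB b b' := conn_of_indecomp hB hiB
  -- one A-step lifts to the product (second coordinate fixed)
  have stepA : ∀ (x y : A) (b : B), RStep actA x y → Conn pact (x, b) (y, b) := by
    rintro x y b ⟨c, s, t, rfl, rfl⟩
    have hm := conn_map (act := sact) (act' := pact)
      (fun p : S × S => (actA c p.1, actB b p.2))
      (fun p u => by simp [hsact, hpact, hA.1, hB.1]) (hSS (s, 1) (t, 1))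
    simpa [hB.2] using hm
  have stepB : ∀ (x y : B) (a : A), RStep actB x y → Conn pact (a, x) (a, y) := by
    rintro x y a ⟨c, s, t, rfl, rfl⟩
    have hm := conn_map (act := sact) (act' := pact)
      (fun p : S × S => (actA a p.1, actB c p.2))
      (fun p u => by simp [hsact, hpact, hA.1, hB.1]) (hSS (1, s) (1, t))
    simpa [hA.2] using hm
  have liftA : ∀ (x y : A) (b : B), Conn actA x y → Conn pact (x, b) (y, b) := by
    intro x y b hxy
    induction hxy with
    | refl => exact Relation.ReflTransGen.refl
    | tail _ step ih => exact ih.trans (stepA _ _ b step)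
  have liftB : ∀ (x y : B) (a : A), Conn actB x y → Conn pact (a, x) (a, y) := by
    intro x y a hxy
    induction hxy with
    | refl => exact Relation.ReflTransGen.refl
    | tail _ step ih => exact ih.trans (stepB _ _ a step)
  exact indecomp_of_conn fun p q =>
    (liftA p.1 q.1 p.2 (connA p.1 q.1)).trans (liftB p.2 q.2 q.1 (connB p.2 q.2))
end

section
/- For a monoid S and natural number n ≥ 2, the product act S^n is indecomposable if and only if S × S is indecomposable. -/
lemma hom_part {S A B' : Type*} {actA : A → S → A} {actB : B' → S → B'}
    (hA : Indecomp actA) {f : A → B'} (hf : ∀ a s, f (actA a s) = actB (f a) s)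
    {X Y : Set B'} (hX : ∀ b ∈ X, ∀ s, actB b s ∈ X) (hY : ∀ b ∈ Y, ∀ s, actB b s ∈ Y)
    (hd : X ∩ Y = ∅) (hu : X ∪ Y = Set.univ)
    (a b : A) : f a ∈ X ↔ f b ∈ X := by
  have key : ∀ a b : A, f a ∈ X → f b ∉ X → False := by
    intro a b ha hb
    have hbY : f b ∈ Y := by
      have := Set.eq_univ_iff_forall.mp hu (f b)
      rcases this with h | h
      · exact absurd h hb
      · exact h
    apply hA
    refine ⟨f ⁻¹' X, f ⁻¹' Y, ⟨⟨a, ha⟩, ?_⟩, ⟨⟨b, hbY⟩, ?_⟩, ?_, ?_⟩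
    · intro c hc s
      simp only [Set.mem_preimage] at *
      rw [hf]; exact hX _ hc s
    · intro c hc s
      simp only [Set.mem_preimage] at *
      rw [hf]; exact hY _ hc s
    · rw [← Set.preimage_inter, hd, Set.preimage_empty]
    · rw [← Set.preimage_union, hu, Set.preimage_univ]
  constructor
  · intro h; by_contra hb; exact key a b h hb
  · intro h; by_contra hb; exact key b a h hb

theorem stmt11 (S : Type*) [Monoid S] (n : ℕ) (hn : 2 ≤ n) :
    Indecomp (fun (g : Fin n → S) (s : S) => fun i => g i * s) ↔
      Indecomp (fun (p : S × S) (s : S) => (p.1 * s, p.2 * s)) := by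
  constructor
  · -- S^n indecomposable → S × S indecomposable
    intro hN hdec2
    obtain ⟨B, C, hB, hC, hd, hu⟩ := hdec2
    apply hN
    have h0 : 0 < n := by omega
    have h1 : 1 < n := by omega
    set π : (Fin n → S) → S × S := fun g => (g ⟨0, h0⟩, g ⟨1, h1⟩) with hπ
    have hclosed : ∀ (X : Set (S × S)), (∀ a ∈ X, ∀ s : S, (a.1 * s, a.2 * s) ∈ X) →
        ∀ g ∈ π ⁻¹' X, ∀ s : S, (fun i => g i * s) ∈ π ⁻¹' X := by
      intro X hX g hg s
      simp only [Set.mem_preimage, hπ] at *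
      exact hX _ hg s
    have hne : ∀ (X : Set (S × S)), X.Nonempty → (π ⁻¹' X).Nonempty := by
      intro X ⟨⟨a, b⟩, hab⟩
      refine ⟨fun i => if i.val = 0 then a else b, ?_⟩
      simp only [Set.mem_preimage, hπ]
      norm_num
      exact hab
    refine ⟨π ⁻¹' B, π ⁻¹' C, ⟨hne B hB.1, hclosed B hB.2⟩, ⟨hne C hC.1, hclosed C hC.2⟩, ?_, ?_⟩
    · rw [← Set.preimage_inter, hd, Set.preimage_empty]
    · rw [← Set.preimage_union, hu, Set.preimage_univ]
  · -- S × S indecomposable → S^n indecomposable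
    intro h2 hdecN
    obtain ⟨B, C, hB, hC, hd, hu⟩ := hdecN
    have key : ∀ g : Fin n → S, (g ∈ B ↔ (fun _ => (1 : S)) ∈ B) := by
      intro g
      have step : ∀ k : ℕ, k < n →
          ((fun i : Fin n => if i.val < k then g i else 1) ∈ B ↔
           (fun i : Fin n => if i.val < k + 1 then g i else 1) ∈ B) := by
        intro k hk
        have hf : ∀ (p : S × S) (s : S),
            (fun i : Fin n => if i.val < k then g i * (p.1 * s)
              else if i.val = k then p.2 * s else p.1 * s) =
            (fun i : Fin n => (if i.val < k then g i * p.1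
              else if i.val = k then p.2 else p.1) * s) := by
          intro p s
          funext i
          split_ifs with h1' h2'
          · rw [mul_assoc]
          · rfl
          · rfl
        have := hom_part h2
          (f := fun p : S × S => fun i : Fin n =>
            if i.val < k then g i * p.1 else if i.val = k then p.2 else p.1)
          hf hB.2 hC.2 hd hu ((1 : S), (1 : S)) ((1 : S), g ⟨k, hk⟩)
        have e1 : (fun i : Fin n =>
            if i.val < k then g i * (1 : S) else if i.val = k then (1 : S) else (1 : S)) =
            (fun i : Fin n => if i.val < k then g i else 1) := by
          funext i
          split_ifs <;> simp
        have e2 : (fun i : Fin n =>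
            if i.val < k then g i * (1 : S) else if i.val = k then g ⟨k, hk⟩ else (1 : S)) =
            (fun i : Fin n => if i.val < k + 1 then g i else 1) := by
          funext i
          by_cases h1' : i.val < k
          · simp [h1', Nat.lt_succ_of_lt h1']
          · by_cases h2' : i.val = k
            · have : i = ⟨k, hk⟩ := Fin.ext h2'
              subst this
              simp
            · have : ¬ i.val < k + 1 := by omega
              simp [h1', h2', this]
        simp only [e1, e2] at this
        exact this
      have chain : ∀ k : ℕ, k ≤ n →
          ((fun _ : Fin n => (1 : S)) ∈ B ↔ (fun i : Fin n => if i.val < k then g i else 1) ∈ B) := by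
        intro k
        induction k with
        | zero => intro _; simp
        | succ m ih =>
          intro hm
          have h1 := ih (by omega)
          have h2' := step m (by omega)
          exact h1.trans h2'
      have := chain n (le_refl n)
      have eg : (fun i : Fin n => if i.val < n then g i else 1) = g := by
        funext i
        simp [i.isLt]
      rw [eg] at this
      exact this.symm
    obtain ⟨b0, hb0⟩ := hB.1
    obtain ⟨c0, hc0⟩ := hC.1
    have h1B : (fun _ : Fin n => (1 : S)) ∈ B := (key b0).mp hb0
    have hcB : c0 ∈ B := (key c0).mpr h1B
    have : c0 ∈ B ∩ C := ⟨hcB, hc0⟩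
    rw [hd] at this
    exact this
end

section
/- If a monoid S is left reversible, then S satisfies condition right-FI with n = 2: any two elements of any indecomposable right S-act are connected by a scheme of length 2. -/
theorem stmt13 (S : Type*) [Monoid S] (hrev : LeftReversible S) :
    ∀ (A : Type*) (act : A → S → A), Nonempty A → IsRAct S act → Indecomp act →
      ∀ a b : A, SchemeOfLength act 2 a b := by
  intro A act _ hact hind a b
  obtain ⟨hassoc, hone⟩ := hact
  -- key claim: any two elements meet
  have key : ∀ x y : A, ∃ u v : S, act x u = act y v := by
    by_contra h
    push_neg at h
    obtain ⟨x, y, hxy⟩ := h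
    set B : Set A := {z | ∃ u v : S, act x u = act z v} with hB
    apply hind
    refine ⟨B, Bᶜ, ⟨⟨x, 1, 1, rfl⟩, ?_⟩, ⟨⟨y, fun ⟨u, v, h⟩ => hxy u v h⟩, ?_⟩,
      Set.inter_compl_self B, Set.union_compl_self B⟩
    · rintro z ⟨u, v, huv⟩ s
      obtain ⟨p, q, hpq⟩ := hrev v s
      exact ⟨u * p, q, by rw [← hassoc, huv, hassoc, hpq, ← hassoc]⟩
    · rintro z hz s ⟨u, v, huv⟩
      exact hz ⟨u, s * v, by rw [huv, hassoc]⟩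
  obtain ⟨u, v, huv⟩ := key a b
  refine ⟨fun i => if i = 1 then a else b, fun i => if i = 1 then 1 else v,
    fun i => if i = 1 then u else 1, by simp [hone], ?_, by simp [hone]⟩
  intro i h1 h2
  interval_cases i
  simpa using huv
end

section
/- A monoid S is right collapsible if and only if S is left reversible and S × S is indecomposable as a right S-act. -/
theorem stmt17 (S : Type*) [Monoid S] :
    (∀ s t : S, ∃ u : S, s * u = t * u) ↔
      (LeftReversible S ∧
        Indecomp (fun (p : S × S) (s : S) => (p.1 * s, p.2 * s))) := by

  constructor
  · rintro h
    constructor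
    · intro a b
      obtain ⟨u, hu⟩ := h a b
      exact ⟨u, u, hu⟩
    · rintro ⟨B, C, ⟨⟨bB, hbB⟩, hBc⟩, ⟨⟨bC, hbC⟩, hCc⟩, hBC, hU⟩
      have key : ∀ (D E : Set (S × S)), ((1, 1) : S × S) ∈ D →
          (∀ a ∈ E, ∀ s : S, (a.1 * s, a.2 * s) ∈ E) →
          (∀ a ∈ D, ∀ s : S, (a.1 * s, a.2 * s) ∈ D) →
          D ∩ E = ∅ → E = ∅ := by
        intro D E h1 hEc hDc hDE
        by_contra hne
        obtain ⟨⟨a, b⟩, hab⟩ := Set.nonempty_iff_ne_empty.2 hne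
        obtain ⟨u, hu⟩ := h a b
        have h2 : (a * u, b * u) ∈ E := hEc _ hab u
        have h3 : (a * u, b * u) ∈ D := by
          have := hDc _ h1 (a * u)
          simpa [hu] using this
        have : (a * u, b * u) ∈ D ∩ E := ⟨h3, h2⟩
        rw [hDE] at this
        exact this
      have h1 : ((1, 1) : S × S) ∈ B ∪ C := hU ▸ Set.mem_univ _
      rcases h1 with h1 | h1
      · have := key B C h1 hCc hBc hBC
        exact absurd (this ▸ hbC) (Set.notMem_empty _)
      · have := key C B h1 hBc hCc (by rw [Set.inter_comm]; exact hBC)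
        exact absurd (this ▸ hbB) (Set.notMem_empty _)
  · rintro ⟨hrev, hind⟩ s t
    by_contra hns
    push_neg at hns
    set B : Set (S × S) := {p | ∃ u : S, p.1 * u = p.2 * u} with hB
    apply hind
    refine ⟨B, Bᶜ, ⟨⟨(1, 1), ⟨1, rfl⟩⟩, ?_⟩, ⟨⟨(s, t), fun ⟨u, hu⟩ => hns u hu⟩, ?_⟩,
      Set.inter_compl_self B, Set.union_compl_self B⟩
    · rintro ⟨a, b⟩ ⟨u, hu⟩ c
      obtain ⟨x, y, hxy⟩ := hrev c u
      refine ⟨x, ?_⟩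
      simp only at hu ⊢
      calc a * c * x = a * (c * x) := by rw [mul_assoc]
        _ = a * (u * y) := by rw [hxy]
        _ = a * u * y := by rw [mul_assoc]
        _ = b * u * y := by rw [hu]
        _ = b * c * x := by rw [mul_assoc, ← hxy, mul_assoc]
    · rintro ⟨a, b⟩ hab c
      intro ⟨u, hu⟩
      apply hab
      refine ⟨c * u, ?_⟩
      simp only at hu ⊢
      rw [← mul_assoc, ← mul_assoc]
      exact hu
end

section
/- Let S = T_n be the monoid of all functions on the finite set {1,...,n} (n ≥ 2) under composition. Then S × S is an indecomposable right S-act, but S is not left reversible. -/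
theorem stmt19 (n : ℕ) (hn : 2 ≤ n) :
    Indecomp (fun (p : Function.End (Fin n) × Function.End (Fin n))
        (s : Function.End (Fin n)) => (p.1 * s, p.2 * s)) ∧
      ¬ LeftReversible (Function.End (Fin n)) := by
  have hx0 : 0 < n := by omega
  have hx1 : 1 < n := by omega
  set x : Fin n := ⟨0, hx0⟩ with hxdef
  set y : Fin n := ⟨1, hx1⟩ with hydef
  have hxy : x ≠ y := by
    intro h
    have := congrArg Fin.val h
    simp [hxdef, hydef] at this
  -- constant maps
  let cst : Fin n → Function.End (Fin n) := fun a => fun _ => a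
  have key : ∀ (h : Function.End (Fin n)) (a : Fin n), h * cst a = cst (h a) := by
    intro h a; rfl
  constructor
  · rintro ⟨B, C, ⟨⟨p, hp⟩, hBc⟩, ⟨⟨q, hq⟩, hCc⟩, hdisj, hunion⟩
    let f : Function.End (Fin n) := fun z => if z = x then p.1 x else q.1 x
    let g : Function.End (Fin n) := fun z => if z = x then p.2 x else q.2 x
    have hfx : f x = p.1 x := if_pos rfl
    have hgx : g x = p.2 x := if_pos rfl
    have hfy : f y = q.1 x := if_neg (fun h => hxy h.symm)
    have hgy : g y = q.2 x := if_neg (fun h => hxy h.symm)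
    have e1 : f * cst x = p.1 * cst x := by rw [key, key, hfx]
    have e2 : g * cst x = p.2 * cst x := by rw [key, key, hgx]
    have e3 : f * cst y = q.1 * cst x := by rw [key, key, hfy]
    have e4 : g * cst y = q.2 * cst x := by rw [key, key, hgy]
    have hpB : (p.1 * cst x, p.2 * cst x) ∈ B := hBc p hp (cst x)
    have hqC : (q.1 * cst x, q.2 * cst x) ∈ C := hCc q hq (cst x)
    have hr : ((f, g) : Function.End (Fin n) × Function.End (Fin n)) ∈ B ∪ C := by
      rw [hunion]; trivial
    rcases hr with hr | hr
    · have h1 : (f * cst y, g * cst y) ∈ B := hBc (f, g) hr (cst y)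
      rw [e3, e4] at h1
      have : (q.1 * cst x, q.2 * cst x) ∈ B ∩ C := ⟨h1, hqC⟩
      rw [hdisj] at this
      exact this
    · have h1 : (f * cst x, g * cst x) ∈ C := hCc (f, g) hr (cst x)
      rw [e1, e2] at h1
      have : (p.1 * cst x, p.2 * cst x) ∈ B ∩ C := ⟨hpB, h1⟩
      rw [hdisj] at this
      exact this
  · intro h
    obtain ⟨u, v, huv⟩ := h (cst x) (cst y)
    have h2 : (cst x * u) x = (cst y * v) x := congrFun huv x
    exact hxy h2
end
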